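/- Every extension of a group G in K by a normal subgroup H embeds into the wreath product: if H is a normal subgroup of K with quotient G = K/H, then K embeds into the (unrestricted) wreath product H ≀ G = H^G ⋊ G (Kaloujnine–Krasner theorem). -/

import Mathlib

/-- The action of `G` on `G → H` given by `(g · f) x = f (x * g)`. -/
def wAct (H G : Type) [Group H] [Group G] : G →* MulAut (G → H) where
  toFun g :=
    { toFun := fun f x => f (x * g)
      invFun := fun f x => f (x * g⁻¹)
      left_inv := fun f => funext fun x => by simp
      right_inv := fun f => funext fun x => by simp
      map_mul' := fun f₁ f₂ => rfl }
  map_one' := by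
    ext f x
    simp
  map_mul' := fun g₁ g₂ => by
    ext f x
    simp [mul_assoc]

/-- The unrestricted wreath product `H ≀ G = H^G ⋊ G`. -/
def Wr (H G : Type) [Group H] [Group G] := (G → H) ⋊[wAct H G] G

instance (H G : Type) [Group H] [Group G] : Group (Wr H G) :=
  inferInstanceAs (Group ((G → H) ⋊[wAct H G] G))

section KK

variable {K : Type} [Group K] (H : Subgroup K) [H.Normal]

noncomputable def kkFun (k : K) (q : K ⧸ H) : ↥H :=
  ⟨q.out * k * ((q * (k : K ⧸ H)).out)⁻¹, by
    rw [← QuotientGroup.eq_one_iff]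
    simp only [QuotientGroup.mk_mul, QuotientGroup.mk_inv, QuotientGroup.out_eq']
    group⟩

/-- Kaloujnine–Krasner: any extension `K` of `G = K/H` by a normal subgroup `H`
embeds into the unrestricted wreath product `H ≀ G`. -/
theorem kaloujnine_krasner (K : Type) [Group K] (H : Subgroup K) [H.Normal] :
    ∃ ψ : K →* Wr ↥H (K ⧸ H), Function.Injective ψ := by
  classical
  refine ⟨{ toFun := fun k => (⟨kkFun H k, (k : K ⧸ H)⟩ : (K ⧸ H → ↥H) ⋊[wAct ↥H (K ⧸ H)] (K ⧸ H))
            map_one' := ?_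
            map_mul' := ?_ }, ?_⟩
  · apply SemidirectProduct.ext
    · funext q
      apply Subtype.ext
      simp [kkFun]
      rfl
    · simp
      rfl
  · intro k₁ k₂
    apply SemidirectProduct.ext
    · funext q
      apply Subtype.ext
      show (q.out * (k₁ * k₂) * ((q * ↑(k₁ * k₂)).out)⁻¹ : K) = _
      have : ((wAct ↥H (K ⧸ H) ↑k₁) (kkFun H k₂)) q = kkFun H k₂ (q * ↑k₁) := rfl
      show _ = ((⟨kkFun H k₁, ↑k₁⟩ * ⟨kkFun H k₂, ↑k₂⟩ : (K ⧸ H → ↥H) ⋊[wAct ↥H (K ⧸ H)] (K ⧸ H)).left q : K)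
      rw [SemidirectProduct.mul_left]
      simp only [Pi.mul_apply, this]
      push_cast [kkFun]
      rw [QuotientGroup.mk_mul, ← mul_assoc]
      group
    · show (k₁ : K ⧸ H) * k₂ = _
      show _ = (⟨kkFun H k₁, ↑k₁⟩ * ⟨kkFun H k₂, ↑k₂⟩ : (K ⧸ H → ↥H) ⋊[wAct ↥H (K ⧸ H)] (K ⧸ H)).right
      rw [SemidirectProduct.mul_right]
  · intro k₁ k₂ h
    have hr : (k₁ : K ⧸ H) = (k₂ : K ⧸ H) := congrArg SemidirectProduct.right h
    have hl := congrArg Subtype.val (congrFun (congrArg SemidirectProduct.left h) 1)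
    change (1 : K ⧸ H).out * k₁ * ((1 * (k₁ : K ⧸ H)).out)⁻¹ = (1 : K ⧸ H).out * k₂ * ((1 * (k₂ : K ⧸ H)).out)⁻¹ at hl
    rw [hr] at hl
    exact mul_left_cancel (mul_right_cancel hl)

end KK
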